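/- Let n, d be positive integers, m, c integers with gcd(m, n) = 1 and gcd(c, d) = 1, and suppose q = m·d − n·c > 0. Let j, k be integers with −c·j + d·k = 1, and set r = −n·k + m·j. Then S(m, n) = S(c, d) + S(r, q) + n/(d·q) + d/(n·q) + q/(n·d) − 3. -/

import Mathlib

open scoped Classical
open Finset

/-- The sawtooth function `((x))`. -/
noncomputable def saw (x : ℝ) : ℝ :=
  if ∃ z : ℤ, (z : ℝ) = x then 0 else x - ⌊x⌋ - 1/2

/-- The classical Dedekind sum `s(m,n)`. -/
noncomputable def ded (m n : ℤ) : ℝ :=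
  ∑ k ∈ Finset.Icc (1 : ℤ) n, saw ((k : ℝ) / n) * saw ((m : ℝ) * k / n)

/-- The normalized Dedekind sum `S(m,n) = 12 s(m,n)`. -/
noncomputable def Sded (m n : ℤ) : ℝ := 12 * ded m n


lemma saw_int (z : ℤ) : saw (z : ℝ) = 0 := by
  unfold saw; rw [if_pos ⟨z, rfl⟩]

lemma saw_zero : saw 0 = 0 := by simpa using saw_int 0

lemma saw_one : saw 1 = 0 := by simpa using saw_int 1

lemma not_int_fract_ne (x : ℝ) (h : ¬ ∃ z : ℤ, (z:ℝ) = x) : Int.fract x ≠ 0 := by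
  intro hf
  refine h ⟨⌊x⌋, ?_⟩
  have := Int.self_sub_floor x
  rw [hf] at this
  linarith

lemma saw_eq_fract (x : ℝ) (h : ¬ ∃ z : ℤ, (z:ℝ) = x) : saw x = Int.fract x - 1/2 := by
  unfold saw
  rw [if_neg h, ← Int.self_sub_floor]

lemma saw_add_int (x : ℝ) (z : ℤ) : saw (x + z) = saw x := by
  unfold saw
  have h : (∃ w : ℤ, (w : ℝ) = x + z) ↔ ∃ w : ℤ, (w : ℝ) = x := by
    constructor
    · rintro ⟨w, hw⟩; exact ⟨w - z, by push_cast; linarith⟩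
    · rintro ⟨w, hw⟩; exact ⟨w + z, by push_cast; linarith⟩
  rw [if_congr h rfl rfl]
  split
  · rfl
  · rw [Int.floor_add_intCast]; push_cast; ring

lemma saw_neg (x : ℝ) : saw (-x) = -saw x := by
  by_cases h : ∃ z : ℤ, (z:ℝ) = x
  · have h' : ∃ z : ℤ, (z:ℝ) = -x := by obtain ⟨z, hz⟩ := h; exact ⟨-z, by push_cast; linarith⟩
    unfold saw; rw [if_pos h, if_pos h']; simp
  · have h' : ¬ ∃ z : ℤ, (z:ℝ) = -x := by
      rintro ⟨z, hz⟩; exact h ⟨-z, by push_cast; linarith⟩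
    rw [saw_eq_fract _ h, saw_eq_fract _ h', Int.fract_neg (not_int_fract_ne x h)]
    ring

lemma floor_int_div (a n : ℤ) (hn : 0 < n) : ⌊(a:ℝ)/(n:ℝ)⌋ = a / n := by
  have h1 : n * (a / n) + a % n = a := Int.mul_ediv_add_emod a n
  have h2 : 0 ≤ a % n := Int.emod_nonneg a hn.ne'
  have h3 : a % n < n := Int.emod_lt_of_pos a hn
  have hnR : (0:ℝ) < (n:ℝ) := by exact_mod_cast hn
  have hc : (n:ℝ) * ((a/n : ℤ):ℝ) + ((a % n : ℤ):ℝ) = a := by exact_mod_cast congrArg (Int.cast : ℤ → ℝ) h1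
  rw [Int.floor_eq_iff]
  constructor
  · rw [le_div_iff₀ hnR]
    nlinarith [(by exact_mod_cast h2 : (0:ℝ) ≤ ((a % n:ℤ):ℝ))]
  · rw [div_lt_iff₀ hnR]
    push_cast
    nlinarith [(by exact_mod_cast h3 : ((a % n:ℤ):ℝ) < n)]

lemma exists_int_div_iff (a n : ℤ) (hn : 0 < n) : (∃ z : ℤ, (z:ℝ) = (a:ℝ)/(n:ℝ)) ↔ n ∣ a := by
  have hnR : ((n:ℝ)) ≠ 0 := by positivity
  constructor
  · rintro ⟨z, hz⟩
    refine ⟨z, ?_⟩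
    have : (a:ℝ) = (n:ℝ) * z := by field_simp at hz; linarith
    exact_mod_cast this
  · rintro ⟨z, rfl⟩
    exact ⟨z, by push_cast; field_simp⟩

lemma saw_div_dvd (a n : ℤ) (hn : 0 < n) (h : n ∣ a) : saw ((a:ℝ)/(n:ℝ)) = 0 := by
  unfold saw; rw [if_pos ((exists_int_div_iff a n hn).mpr h)]

lemma saw_div_eq (a n : ℤ) (hn : 0 < n) (h : ¬ n ∣ a) :
    saw ((a:ℝ)/(n:ℝ)) = ((a % n : ℤ):ℝ)/(n:ℝ) - 1/2 := by
  unfold saw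
  rw [if_neg (fun hx => h ((exists_int_div_iff a n hn).mp hx)), floor_int_div a n hn]
  have h1 : a % n = a - n * (a / n) := Int.emod_def a n
  have hnR : ((n:ℝ)) ≠ 0 := by positivity
  rw [h1]; push_cast; field_simp

lemma saw_mod (a n : ℤ) (hn : 0 < n) : saw (((a % n : ℤ):ℝ)/(n:ℝ)) = saw ((a:ℝ)/(n:ℝ)) := by
  have h1 : a % n = a - n * (a / n) := Int.emod_def a n
  have hnR : ((n:ℝ)) ≠ 0 := by positivity
  have : ((a % n : ℤ):ℝ)/(n:ℝ) = (a:ℝ)/n + (-(a/n) : ℤ) := by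
    rw [h1]; push_cast; field_simp; ring
  rw [this, saw_add_int]

lemma saw_congr (a b n : ℤ) (hn : 0 < n) (h : a % n = b % n) :
    saw ((a:ℝ)/(n:ℝ)) = saw ((b:ℝ)/(n:ℝ)) := by
  rw [← saw_mod a n hn, ← saw_mod b n hn, h]

lemma Ico_succ_insert (N : ℤ) (h : 0 ≤ N) : Ico (0:ℤ) (N+1) = insert N (Ico 0 N) := by
  ext x; simp [Finset.mem_Ico, Finset.mem_insert]; omega

lemma sum_Ico_id (N : ℤ) (h : 0 ≤ N) : ∑ k ∈ Ico (0:ℤ) N, (k:ℝ) = N*(N-1)/2 := by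
  refine Int.le_induction (motive := fun N _ => ∑ k ∈ Ico (0:ℤ) N, (k:ℝ) = N*(N-1)/2) ?_ ?_ N h
  · simp
  · intro n hn ih
    rw [Ico_succ_insert n hn, Finset.sum_insert (by simp), ih]
    push_cast; ring

lemma sum_Ico_sq (N : ℤ) (h : 0 ≤ N) : ∑ k ∈ Ico (0:ℤ) N, (k:ℝ)^2 = N*(N-1)*(2*N-1)/6 := by
  refine Int.le_induction (motive := fun N _ => ∑ k ∈ Ico (0:ℤ) N, (k:ℝ)^2 = N*(N-1)*(2*N-1)/6) ?_ ?_ N h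
  · simp
  · intro n hn ih
    rw [Ico_succ_insert n hn, Finset.sum_insert (by simp), ih]
    push_cast; ring

lemma sum_mul_emod_bij (n u v : ℤ) (hn : 0 < n) (huv : (u*v) % n = 1 % n) (G : ℤ → ℝ) :
    ∑ k ∈ Ico (0:ℤ) n, G ((u*k) % n) = ∑ k ∈ Ico (0:ℤ) n, G k := by
  refine Finset.sum_nbij' (i := fun k => (u*k) % n) (j := fun k => (v*k) % n) ?_ ?_ ?_ ?_ ?_
  · intro a _; simp only [Finset.mem_Ico]
    exact ⟨Int.emod_nonneg _ hn.ne', Int.emod_lt_of_pos _ hn⟩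
  · intro a _; simp only [Finset.mem_Ico]
    exact ⟨Int.emod_nonneg _ hn.ne', Int.emod_lt_of_pos _ hn⟩
  · intro a ha
    simp only [Finset.mem_Ico] at ha
    show (v * ((u*a) % n)) % n = a
    have h1 : (v * ((u*a) % n)) % n = (v * (u * a)) % n := by
      rw [Int.mul_emod, Int.emod_emod_of_dvd _ dvd_rfl, ← Int.mul_emod]
    rw [h1]
    have h2 : (v * (u * a)) % n = ((u*v) * a) % n := by ring_nf
    rw [h2]
    have h3 : ((u*v) * a) % n = (1 * a) % n := by
      have : (u*v) % n = 1 % n := huv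
      conv_lhs => rw [Int.mul_emod, this, ← Int.mul_emod]
    rw [h3, one_mul]
    exact Int.emod_eq_of_lt ha.1 ha.2
  · intro a ha
    simp only [Finset.mem_Ico] at ha
    show (u * ((v*a) % n)) % n = a
    have h1 : (u * ((v*a) % n)) % n = (u * (v * a)) % n := by
      rw [Int.mul_emod, Int.emod_emod_of_dvd _ dvd_rfl, ← Int.mul_emod]
    rw [h1, show u * (v*a) = (u*v)*a by ring]
    have h3 : ((u*v) * a) % n = (1 * a) % n := by
      conv_lhs => rw [Int.mul_emod, huv, ← Int.mul_emod]
    rw [h3, one_mul]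
    exact Int.emod_eq_of_lt ha.1 ha.2
  · intro a _; rfl

lemma exists_inverse (m n : ℤ) (h : Int.gcd m n = 1) : ∃ v : ℤ, (m*v) % n = 1 % n := by
  have hco : IsCoprime m n := Int.isCoprime_iff_gcd_eq_one.mpr h
  obtain ⟨a, b, hab⟩ := hco
  refine ⟨a, ?_⟩
  have : (m*a + n*b) % n = (m*a) % n := Int.add_mul_emod_self_left ..
  rw [← this, show m*a + n*b = 1 by linarith [hab]]

lemma ndvd_of_coprime (m n k : ℤ) (hg : Int.gcd m n = 1) (h1 : 0 < k) (h2 : k < n) :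
    ¬ n ∣ m * k := by
  intro hdvd
  have hco : IsCoprime n m := (Int.isCoprime_iff_gcd_eq_one.mpr hg).symm
  have : n ∣ k := hco.dvd_of_dvd_mul_left hdvd
  have := Int.le_of_dvd h1 this
  omega

lemma ded_Ico0 (m n : ℤ) (hn : 0 < n) :
    ded m n = ∑ k ∈ Ico (0:ℤ) n, saw ((k:ℝ)/n) * saw ((m:ℝ)*k/n) := by
  unfold ded
  have h1 : Icc (1:ℤ) n = insert n (Ico 1 n) := by ext x; simp [Finset.mem_Icc, Finset.mem_Ico]; omega
  have h2 : Ico (0:ℤ) n = insert 0 (Ico 1 n) := by ext x; simp [Finset.mem_Ico]; omega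
  rw [h1, h2, Finset.sum_insert (by simp), Finset.sum_insert (by simp)]
  have hnR : ((n:ℝ)) ≠ 0 := by positivity
  rw [show ((n:ℝ))/n = ((1:ℤ):ℝ) by push_cast; field_simp]
  rw [saw_int]
  simp [saw_zero]

lemma ded_one (m : ℤ) : ded m 1 = 0 := by
  unfold ded
  rw [show Icc (1:ℤ) 1 = {1} by rfl]
  simp [saw_one]

lemma ded_neg (m n : ℤ) : ded (-m) n = - ded m n := by
  unfold ded
  rw [← Finset.sum_neg_distrib]
  apply Finset.sum_congr rfl
  intro k _
  rw [show ((-m : ℤ):ℝ) * k / n = -((m:ℝ)*k/n) by push_cast; ring, saw_neg]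
  ring

lemma ded_congr (m m' n : ℤ) (hn : 0 < n) (h : m % n = m' % n) : ded m n = ded m' n := by
  unfold ded
  apply Finset.sum_congr rfl
  intro k _
  have h1 : (m:ℝ)*k/n = ((m*k : ℤ):ℝ)/n := by push_cast; ring
  have h2 : (m':ℝ)*k/n = ((m'*k : ℤ):ℝ)/n := by push_cast; ring
  rw [h1, h2, saw_congr _ _ _ hn (Int.ModEq.mul_right k h)]

lemma ded_inv (m m' n : ℤ) (hn : 0 < n) (h : (m*m') % n = 1 % n) : ded m n = ded m' n := by
  rw [ded_Ico0 m n hn, ded_Ico0 m' n hn]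
  have key := sum_mul_emod_bij n m m' hn h
    (fun k => saw ((k:ℝ)/n) * saw (((m'*k : ℤ):ℝ)/n))
  have h2 : ∀ k ∈ Ico (0:ℤ) n, saw ((k:ℝ)/n) * saw (((m'*k:ℤ):ℝ)/n)
      = saw ((k:ℝ)/n) * saw ((m':ℝ)*k/n) := by
    intro k _; rw [show ((m'*k:ℤ):ℝ) = (m':ℝ)*k by push_cast; ring]
  rw [← Finset.sum_congr rfl h2]
  rw [← key]
  apply Finset.sum_congr rfl
  intro k _
  have e1 : saw (((m*k % n : ℤ):ℝ)/n) = saw ((m:ℝ)*k/n) := by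
    rw [saw_mod _ _ hn]; congr 1; push_cast; ring
  have e2 : saw (((m' * (m*k % n) : ℤ):ℝ)/n) = saw ((k:ℝ)/n) := by
    have hmod : (m' * (m*k % n)) % n = k % n := by
      have s1 : m' * (m*k % n) ≡ m' * (m*k) [ZMOD n] :=
        Int.ModEq.mul_left m' (Int.emod_emod_of_dvd _ dvd_rfl)
      have s2 : m' * (m*k) = (m*m') * k := by ring
      have s3 : (m*m') * k ≡ 1 * k [ZMOD n] := Int.ModEq.mul_right k h
      calc (m' * (m*k % n)) % n = (m' * (m*k)) % n := s1
        _ = ((m*m')*k) % n := by rw [s2]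
        _ = (1*k) % n := s3
        _ = k % n := by rw [one_mul]
    exact saw_congr _ _ _ hn hmod
  rw [e1, e2]
  ring

lemma ded_formula (m n : ℤ) (hn : 0 < n) (hg : Int.gcd m n = 1) :
    ded m n = (∑ k ∈ Ico (0:ℤ) n, (k:ℝ) * (((m*k) % n : ℤ):ℝ))/(n:ℝ)^2 - ((n:ℝ)-1)/4 := by
  have hnR : (0:ℝ) < (n:ℝ) := by exact_mod_cast hn
  rw [ded_Ico0 m n hn]
  have step1 : ∀ k ∈ Ico (0:ℤ) n, saw ((k:ℝ)/n) * saw ((m:ℝ)*k/n)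
      = ((k:ℝ)/n - 1/2) * ((((m*k) % n : ℤ):ℝ)/n - 1/2) - (if k = 0 then 1/4 else 0) := by
    intro k hk
    simp only [Finset.mem_Ico] at hk
    by_cases h0 : k = 0
    · subst h0
      simp [saw_zero]; norm_num
    · have hk1 : 0 < k := by omega
      have hndk : ¬ n ∣ k := by intro hd; have := Int.le_of_dvd hk1 hd; omega
      have hndmk : ¬ n ∣ m*k := ndvd_of_coprime m n k hg hk1 hk.2
      rw [if_neg h0, sub_zero]
      rw [show (m:ℝ)*k/n = ((m*k:ℤ):ℝ)/n by push_cast; ring]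
      rw [saw_div_eq _ _ hn hndk, saw_div_eq _ _ hn hndmk]
      rw [Int.emod_eq_of_lt hk1.le hk.2]
  rw [Finset.sum_congr rfl step1]
  rw [Finset.sum_sub_distrib]
  have hz : ∑ k ∈ Ico (0:ℤ) n, (if k = 0 then (1:ℝ)/4 else 0) = 1/4 := by
    rw [Finset.sum_ite_eq' (Ico (0:ℤ) n) 0 (fun _ => (1:ℝ)/4)]
    rw [if_pos (by simp [Finset.mem_Ico]; omega)]
  rw [hz]
  -- expand the product
  have expand : ∀ k ∈ Ico (0:ℤ) n, ((k:ℝ)/n - 1/2) * ((((m*k) % n : ℤ):ℝ)/n - 1/2)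
      = (k:ℝ) * (((m*k) % n : ℤ):ℝ)/(n:ℝ)^2 - (1/(2*n)) * (k:ℝ)
        - (1/(2*n)) * (((m*k)%n : ℤ):ℝ) + 1/4 := by
    intro k _; field_simp; ring
  rw [Finset.sum_congr rfl expand]
  obtain ⟨v, hv⟩ := exists_inverse m n hg
  have hbij : ∑ k ∈ Ico (0:ℤ) n, (((m*k) % n : ℤ):ℝ) = ∑ k ∈ Ico (0:ℤ) n, (k:ℝ) :=
    sum_mul_emod_bij n m v hn hv (fun k => (k:ℝ))
  have hsum : ∑ k ∈ Ico (0:ℤ) n, (k:ℝ) = (n:ℝ)*((n:ℝ)-1)/2 := sum_Ico_id n hn.le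
  simp only [Finset.sum_add_distrib, Finset.sum_sub_distrib, ← Finset.mul_sum,
    Finset.sum_const, Finset.sum_div]
  rw [hbij, hsum]
  rw [Int.card_Ico]
  have hcard : (((n - 0).toNat : ℕ):ℝ) = (n:ℝ) := by
    have h' : ((n-0).toNat : ℤ) = n := by rw [Int.toNat_of_nonneg (by omega)]; ring
    exact_mod_cast h'
  rw [nsmul_eq_mul, hcard]
  field_simp
  ring

lemma count1 (m n k : ℤ) (hm : 0 < m) (hn : 0 < n) (hg : Int.gcd m n = 1)
    (hk0 : 0 ≤ k) (hkn : k < n) :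
    filter (fun j => n*j < m*k) (Ico (1:ℤ) m) = Ico 1 (m*k/n + 1) := by
  ext j
  simp only [Finset.mem_filter, Finset.mem_Ico]
  constructor
  · rintro ⟨⟨h1, h2⟩, h3⟩
    refine ⟨h1, ?_⟩
    rw [Int.lt_add_one_iff, Int.le_ediv_iff_mul_le hn]
    nlinarith
  · rintro ⟨h1, h2⟩
    rw [Int.lt_add_one_iff, Int.le_ediv_iff_mul_le hn] at h2
    by_cases hk : k = 0
    · subst hk; simp at h2; nlinarith
    · have hkpos : 0 < k := by omega
      have hne : n*j ≠ m*k := by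
        intro he
        exact ndvd_of_coprime m n k hg hkpos hkn ⟨j, he.symm⟩
      have hj : j ≤ m*k/n := (Int.le_ediv_iff_mul_le hn).mpr h2
      have hlt : m*k/n < m := by
        rw [Int.ediv_lt_iff_lt_mul hn]
        have : m*k < m*n := mul_lt_mul_of_pos_left hkn hm
        nlinarith
      have hjm : j < m := lt_of_le_of_lt hj hlt
      have hle : n*j ≤ m*k := by rw [mul_comm]; exact h2
      exact ⟨⟨h1, hjm⟩, lt_of_le_of_ne hle hne⟩

lemma count2 (m n j : ℤ) (hm : 0 < m) (hn : 0 < n) (hj1 : 1 ≤ j) :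
    filter (fun k => n*j < m*k) (Ico (0:ℤ) n) = Ico (n*j/m + 1) n := by
  have hg0 : 0 ≤ n*j/m := Int.ediv_nonneg (mul_nonneg hn.le (by linarith)) hm.le
  ext k
  simp only [Finset.mem_filter, Finset.mem_Ico]
  constructor
  · rintro ⟨⟨h1, h2⟩, h3⟩
    refine ⟨?_, h2⟩
    rw [Int.add_one_le_iff, Int.ediv_lt_iff_lt_mul hm]
    nlinarith
  · rintro ⟨h1, h2⟩
    have hk0 : (0:ℤ) ≤ k := le_trans (by linarith [hg0]) h1
    rw [Int.add_one_le_iff, Int.ediv_lt_iff_lt_mul hm] at h1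
    exact ⟨⟨hk0, h2⟩, by rw [mul_comm m k]; exact h1⟩

lemma double_count (m n : ℤ) (hm : 0 < m) (hn : 0 < n) (hg : Int.gcd m n = 1) :
    ∑ k ∈ Ico (0:ℤ) n, (k:ℝ) * (((m*k/n) : ℤ):ℝ)
      = ((m:ℝ)-1) * (∑ k ∈ Ico (0:ℤ) n, (k:ℝ))
        - ∑ j ∈ Ico (0:ℤ) m, (((n*j/m : ℤ):ℝ) + 1) * ((n*j/m : ℤ):ℝ) / 2 := by
  have key1 : ∀ k ∈ Ico (0:ℤ) n,
      (k:ℝ) * (((m*k/n) : ℤ):ℝ) = ∑ j ∈ Ico (1:ℤ) m, (if n*j < m*k then (k:ℝ) else 0) := by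
    intro k hk
    simp only [Finset.mem_Ico] at hk
    rw [← Finset.sum_filter, count1 m n k hm hn hg hk.1 hk.2, Finset.sum_const]
    rw [Int.card_Ico]
    have hg0 : 0 ≤ m*k/n := Int.ediv_nonneg (mul_nonneg hm.le hk.1) hn.le
    have : (((m*k/n + 1 - 1).toNat : ℕ):ℝ) = ((m*k/n : ℤ):ℝ) := by
      have h' : ((m*k/n + 1 - 1).toNat : ℤ) = m*k/n := by
        rw [show m*k/n + 1 - 1 = m*k/n by ring, Int.toNat_of_nonneg hg0]
      exact_mod_cast h'
    rw [nsmul_eq_mul, this]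
    ring
  rw [Finset.sum_congr rfl key1, Finset.sum_comm]
  have key2 : ∀ j ∈ Ico (1:ℤ) m,
      (∑ k ∈ Ico (0:ℤ) n, if n*j < m*k then (k:ℝ) else 0)
        = (∑ k ∈ Ico (0:ℤ) n, (k:ℝ)) - (((n*j/m : ℤ):ℝ) + 1) * ((n*j/m : ℤ):ℝ) / 2 := by
    intro j hj
    simp only [Finset.mem_Ico] at hj
    rw [← Finset.sum_filter, count2 m n j hm hn hj.1]
    have hg0 : 0 ≤ n*j/m := Int.ediv_nonneg (mul_nonneg hn.le (by linarith [hj.1])) hm.le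
    have hgn : n*j/m + 1 ≤ n := by
      have : n*j/m < n := by
        rw [Int.ediv_lt_iff_lt_mul hm]
        nlinarith
      omega
    have hsplit : (∑ k ∈ Ico (0:ℤ) (n*j/m+1), (k:ℝ)) + (∑ k ∈ Ico (n*j/m+1) n, (k:ℝ))
        = ∑ k ∈ Ico (0:ℤ) n, (k:ℝ) := by
      rw [← Finset.sum_union (Finset.Ico_disjoint_Ico_consecutive 0 (n*j/m+1) n),
        Finset.Ico_union_Ico_eq_Ico (by linarith [hg0]) hgn]
    have hlow : ∑ k ∈ Ico (0:ℤ) (n*j/m + 1), (k:ℝ) = ((n*j/m : ℤ):ℝ)*(((n*j/m : ℤ):ℝ)+1)/2 := by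
      rw [sum_Ico_id _ (by linarith [hg0])]
      push_cast
      ring
    rw [← hsplit, hlow]
    ring
  rw [Finset.sum_congr rfl key2, Finset.sum_sub_distrib, Finset.sum_const, Int.card_Ico]
  have hcard : (((m - 1).toNat : ℕ):ℝ) = (m:ℝ) - 1 := by
    have h' : ((m - 1).toNat : ℤ) = m - 1 := Int.toNat_of_nonneg (by omega)
    exact_mod_cast h'
  rw [nsmul_eq_mul, hcard]
  have hext : ∑ j ∈ Ico (0:ℤ) m, (((n*j/m : ℤ):ℝ) + 1) * ((n*j/m : ℤ):ℝ) / 2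
      = ∑ j ∈ Ico (1:ℤ) m, (((n*j/m : ℤ):ℝ) + 1) * ((n*j/m : ℤ):ℝ) / 2 := by
    rw [show Ico (0:ℤ) m = insert 0 (Ico 1 m) by ext x; simp [Finset.mem_Ico]; omega,
      Finset.sum_insert (by simp)]
    norm_num
  rw [hext]

lemma emod_split (m n : ℤ) (hn : 0 < n) :
    ∀ k ∈ Ico (0:ℤ) n, (k:ℝ) * (((m*k) % n : ℤ):ℝ)
      = (m:ℝ)*(k:ℝ)^2 - (n:ℝ)*((k:ℝ) * (((m*k/n) : ℤ):ℝ)) := by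
  intro k _
  have h : ((m*k % n : ℤ):ℝ) = (m:ℝ)*(k:ℝ) - (n:ℝ)*((m*k/n : ℤ):ℝ) := by
    have := Int.emod_def (m*k) n
    have hc := congrArg (Int.cast : ℤ → ℝ) this
    push_cast at hc
    linarith
  rw [h]; ring

lemma reciprocity (m n : ℤ) (hm : 0 < m) (hn : 0 < n) (hg : Int.gcd m n = 1) :
    ded m n + ded n m = -1/4 + ((m:ℝ)/n + (n:ℝ)/m + 1/((m:ℝ)*n))/12 := by
  have hmR : (0:ℝ) < (m:ℝ) := by exact_mod_cast hm
  have hnR : (0:ℝ) < (n:ℝ) := by exact_mod_cast hn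
  have hg' : Int.gcd n m = 1 := by rwa [Int.gcd_comm]
  have h1 := ded_formula m n hn hg
  have h2 := ded_formula n m hm hg'
  -- A = m*K2 - n*F
  have hA : ∑ k ∈ Ico (0:ℤ) n, (k:ℝ) * (((m*k) % n : ℤ):ℝ)
      = (m:ℝ) * (∑ k ∈ Ico (0:ℤ) n, (k:ℝ)^2)
        - (n:ℝ) * (∑ k ∈ Ico (0:ℤ) n, (k:ℝ) * (((m*k/n) : ℤ):ℝ)) := by
    rw [Finset.sum_congr rfl (emod_split m n hn), Finset.sum_sub_distrib,
      ← Finset.mul_sum, ← Finset.mul_sum]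
  have hF := double_count m n hm hn hg
  -- G in terms of A' := ∑_{j ∈ Ico 0 m} j * (n*j % m)
  have hG : ∑ j ∈ Ico (0:ℤ) m, (((n*j/m : ℤ):ℝ) + 1) * ((n*j/m : ℤ):ℝ) / 2
      = ((n:ℝ)^2 * (∑ j ∈ Ico (0:ℤ) m, (j:ℝ)^2)
          - 2*(n:ℝ) * (∑ j ∈ Ico (0:ℤ) m, (j:ℝ) * (((n*j) % m : ℤ):ℝ))
          + (∑ j ∈ Ico (0:ℤ) m, (((n*j) % m : ℤ):ℝ)^2)
          + (m:ℝ)*(n:ℝ)*(∑ j ∈ Ico (0:ℤ) m, (j:ℝ))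
          - (m:ℝ)*(∑ j ∈ Ico (0:ℤ) m, (((n*j) % m : ℤ):ℝ))) / (2*(m:ℝ)^2) := by
    rw [eq_div_iff (by positivity)]
    have hterm : ∀ j ∈ Ico (0:ℤ) m, (((n*j/m : ℤ):ℝ) + 1) * ((n*j/m : ℤ):ℝ) / 2 * (2*(m:ℝ)^2)
        = (n:ℝ)^2*(j:ℝ)^2 - 2*(n:ℝ)*((j:ℝ) * (((n*j) % m : ℤ):ℝ)) + (((n*j) % m : ℤ):ℝ)^2
          + (m:ℝ)*(n:ℝ)*(j:ℝ) - (m:ℝ)*(((n*j) % m : ℤ):ℝ) := by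
      intro j _
      have h : (m:ℝ)*((n*j/m : ℤ):ℝ) = (n:ℝ)*(j:ℝ) - ((n*j % m : ℤ):ℝ) := by
        have := Int.emod_def (n*j) m
        have hc := congrArg (Int.cast : ℤ → ℝ) this
        push_cast at hc
        linarith
      linear_combination ((m:ℝ)*((n*j/m : ℤ):ℝ) + (n:ℝ)*(j:ℝ) - ((n*j % m : ℤ):ℝ) + (m:ℝ)) * h
    rw [Finset.sum_mul, Finset.sum_congr rfl hterm]
    simp only [Finset.sum_add_distrib, Finset.sum_sub_distrib, ← Finset.mul_sum]
  -- bijection sums on the m side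
  obtain ⟨v, hv⟩ := exists_inverse n m hg'
  have hb1 : ∑ j ∈ Ico (0:ℤ) m, (((n*j) % m : ℤ):ℝ) = ∑ j ∈ Ico (0:ℤ) m, (j:ℝ) :=
    sum_mul_emod_bij m n v hm hv (fun x => (x:ℝ))
  have hb2 : ∑ j ∈ Ico (0:ℤ) m, (((n*j) % m : ℤ):ℝ)^2 = ∑ j ∈ Ico (0:ℤ) m, (j:ℝ)^2 :=
    sum_mul_emod_bij m n v hm hv (fun x => (x:ℝ)^2)
  -- Gauss sums
  have g1 : ∑ k ∈ Ico (0:ℤ) n, (k:ℝ) = (n:ℝ)*((n:ℝ)-1)/2 := sum_Ico_id n hn.le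
  have g2 : ∑ k ∈ Ico (0:ℤ) n, (k:ℝ)^2 = (n:ℝ)*((n:ℝ)-1)*(2*(n:ℝ)-1)/6 := sum_Ico_sq n hn.le
  have g3 : ∑ j ∈ Ico (0:ℤ) m, (j:ℝ) = (m:ℝ)*((m:ℝ)-1)/2 := sum_Ico_id m hm.le
  have g4 : ∑ j ∈ Ico (0:ℤ) m, (j:ℝ)^2 = (m:ℝ)*((m:ℝ)-1)*(2*(m:ℝ)-1)/6 := sum_Ico_sq m hm.le
  rw [h1, h2, hA, hF, hG, hb1, hb2, g1, g2, g3, g4]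
  field_simp
  ring

lemma base_case (n q m c j k r : ℤ) (hn : 0 < n) (hq : 0 < q)
    (hgmn : Int.gcd m n = 1) (hqe : q = m*1 - n*c) (hjk : -c*j + 1*k = 1)
    (hr : r = -n*k + m*j) :
    12*ded m n = 12*ded c 1 + 12*ded r q
      + (n:ℝ)/(((1:ℤ):ℝ)*q) + ((1:ℤ):ℝ)/((n:ℝ)*q) + (q:ℝ)/((n:ℝ)*((1:ℤ):ℝ)) - 3 := by
  have hnR : (0:ℝ) < (n:ℝ) := by exact_mod_cast hn
  have hqR : (0:ℝ) < (q:ℝ) := by exact_mod_cast hq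
  have hgqn : Int.gcd q n = 1 := by
    have hco : IsCoprime m n := Int.isCoprime_iff_gcd_eq_one.mpr hgmn
    have h2 : IsCoprime (m + n*(-c)) n := hco.add_mul_left_left (-c)
    rw [show m + n*(-c) = q by linear_combination -hqe] at h2
    exact Int.isCoprime_iff_gcd_eq_one.mp h2
  have e1 : ded m n = ded q n := by
    apply ded_congr m q n hn
    have : (m + n*(-c)) % n = m % n := Int.add_mul_emod_self_left ..
    rw [show q = m + n*(-c) by linear_combination hqe, this]
  have e2 : ded r q = ded (-n) q := by
    apply ded_congr r (-n) q hq
    have : (-n + q*j) % q = (-n) % q := Int.add_mul_emod_self_left ..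
    rw [show r = -n + q*j by linear_combination hr - n*hjk - j*hqe, this]
  have e3 : ded (-n) q = -ded n q := ded_neg n q
  have R := reciprocity q n hq hn hgqn
  have c1 : ded c 1 = 0 := ded_one c
  rw [e1, e2, e3, c1]
  push_cast
  linear_combination 12 * R

set_option maxHeartbeats 1000000 in
lemma three_term_aux : ∀ (D : ℕ) (d : ℤ), 0 < d → d.toNat ≤ D →
    ∀ n q m c j k r : ℤ, 0 < n → 0 < q →
    Int.gcd m n = 1 → Int.gcd c d = 1 → q = m*d - n*c → -c*j + d*k = 1 →
    r = -n*k + m*j →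
    12*ded m n = 12*ded c d + 12*ded r q
      + (n:ℝ)/((d:ℝ)*q) + (d:ℝ)/((n:ℝ)*q) + (q:ℝ)/((n:ℝ)*d) - 3 := by
  intro D
  induction D with
  | zero => intro d hd hD; omega
  | succ D ih =>
    intro d hd hD n q m c j k r hn hq hgmn hgcd hqe hjk hr
    by_cases hd1 : d = 1
    · subst hd1
      exact base_case n q m c j k r hn hq hgmn hqe hjk hr
    · -- d ≥ 2
      have hd2 : 2 ≤ d := by omega
      -- choice of representative j'
      have hjd : ¬ d ∣ j := by
        intro ⟨w, hw⟩
        have : d * (-c*w + k) = 1 := by rw [hw] at hjk; linear_combination hjk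
        have := Int.eq_one_of_mul_eq_one_right (by omega) this
        omega
      have hm0 : 0 ≤ j % d := Int.emod_nonneg j (by omega)
      have hmlt : j % d < d := Int.emod_lt_of_pos j hd
      have hmne : j % d ≠ 0 := fun h => hjd (Int.dvd_of_emod_eq_zero h)
      set t : ℤ := -(j / d) - 1 with ht
      have hj' : j % d - d = j + t*d := by
        rw [ht, Int.emod_def]; ring
      set e : ℤ := d - j % d with he
      have he1 : 0 < e := by omega
      have hed : e < d := by omega
      set k' : ℤ := k + t*c with hk'
      -- -c*j' + d*k' = 1  where j' = -e = j + t*d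
      have hjk' : -c*(-e) + d*k' = 1 := by
        rw [hk', show -e = j + t*d by rw [he]; linarith [hj']]
        linear_combination hjk
      have hdk : d*k' + c*e = 1 := by linear_combination hjk'
      set f : ℤ := n*k' + m*e with hf
      have hdf : d*f = n + e*q := by
        rw [hf, hqe]; linear_combination n*hdk
      have hf1 : 0 < f := by nlinarith [hdf, mul_pos he1 hq]
      -- coprimality facts
      have hgde : Int.gcd d e = 1 :=
        Int.isCoprime_iff_gcd_eq_one.mp ⟨k', c, by linear_combination hdk⟩
      have hgke : Int.gcd (-k') e = 1 :=
        Int.isCoprime_iff_gcd_eq_one.mp ⟨-d, c, by linear_combination hdk⟩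
      have hgqf : Int.gcd q f = 1 := by
        obtain ⟨a, b, hab⟩ := Int.isCoprime_iff_gcd_eq_one.mpr hgmn
        refine Int.isCoprime_iff_gcd_eq_one.mp ⟨a*k' - b*e, a*c + b*d, ?_⟩
        rw [hqe, hf]
        linear_combination (d*k' + c*e)*hab + hdk
      have hgd0 : Int.gcd (0:ℤ) 1 = 1 := by decide
      -- three applications of the induction hypothesis
      have I1 := ih 1 one_pos (by omega) e d d 0 0 1 (-e) he1 hd hgde hgd0
        (by ring) (by ring) (by ring)
      have I2 := ih e he1 (by omega) n f m (-k') d c q hn hf1 hgmn hgke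
        (by rw [hf]; ring) (by linear_combination hdk) (by rw [hqe]; ring)
      have I3 := ih 1 one_pos (by omega) f q q 0 0 1 (-f) hf1 hq hgqf hgd0
        (by ring) (by ring) (by ring)
      -- conversions
      have c2 : ded e d = ded c d := by
        refine (ded_inv c e d hd ?_).symm
        have h1 : (c*e + d*k') % d = (c*e) % d := Int.add_mul_emod_self_left ..
        rw [← h1, show c*e + d*k' = 1 by linear_combination hdk]
      have c3 : ded d e = ded k' e := by
        refine ded_inv d k' e he1 ?_
        have h1 : (d*k' + e*c) % e = (d*k') % e := Int.add_mul_emod_self_left ..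
        rw [← h1, show d*k' + e*c = 1 by linear_combination hdk]
      have c4 : ded (-f) q = ded r q := by
        apply ded_congr (-f) r q hq
        have h1 : (r + q*t) % q = r % q := Int.add_mul_emod_self_left ..
        have h1' : -e = j + t*d := by rw [he]; linarith [hj']
        rw [show -f = r + q*t by
          rw [hf, hr, hk', hqe]; linear_combination m*h1', h1]
      have hn0 : ((n:ℝ)) ≠ 0 := by positivity
      have hd0 : ((d:ℝ)) ≠ 0 := by positivity
      have hq0 : ((q:ℝ)) ≠ 0 := by positivity
      have he0 : ((e:ℝ)) ≠ 0 := by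
        have : (0:ℝ) < (e:ℝ) := by exact_mod_cast he1
        positivity
      have hf0 : ((f:ℝ)) ≠ 0 := by
        have : (0:ℝ) < (f:ℝ) := by exact_mod_cast hf1
        positivity
      have hdfR : (d:ℝ)*(f:ℝ) = (n:ℝ) + (e:ℝ)*(q:ℝ) := by exact_mod_cast hdf
      have hfR : (f:ℝ) = ((n:ℝ) + (e:ℝ)*(q:ℝ))/(d:ℝ) := by
        rw [eq_div_iff hd0]; linear_combination hdfR
      -- rewrite the I's
      rw [ded_one, ded_neg, c2] at I1
      rw [ded_neg, c3.symm] at I2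
      have c4' : ded f q = - ded r q := by rw [← c4, ded_neg]; ring
      rw [ded_one, ded_neg, c4'] at I3
      push_cast at I1 I2 I3 ⊢
      -- final rational identity
      have RI : (n:ℝ)/((e:ℝ)*(f:ℝ)) + (e:ℝ)/((n:ℝ)*(f:ℝ)) + (f:ℝ)/((n:ℝ)*(e:ℝ))
          - ((e:ℝ)/((1:ℝ)*(d:ℝ)) + (1:ℝ)/((e:ℝ)*(d:ℝ)) + (d:ℝ)/((e:ℝ)*(1:ℝ)))
          + ((f:ℝ)/((1:ℝ)*(q:ℝ)) + (1:ℝ)/((f:ℝ)*(q:ℝ)) + (q:ℝ)/((f:ℝ)*(1:ℝ)))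
          = (n:ℝ)/((d:ℝ)*q) + (d:ℝ)/((n:ℝ)*q) + (q:ℝ)/((n:ℝ)*d) := by
        rw [hfR]
        field_simp
        ring
      linear_combination I2 - I1 + I3 + RI

theorem three_term_relation (n d : ℤ) (hn : 0 < n) (hd : 0 < d) (m c : ℤ)
    (hm : Int.gcd m n = 1) (hc : Int.gcd c d = 1)
    (q : ℤ) (hq : q = m * d - n * c) (hqpos : 0 < q)
    (j k : ℤ) (hjk : -c * j + d * k = 1) (r : ℤ) (hr : r = -n * k + m * j) :
    Sded m n = Sded c d + Sded r q + (n : ℝ) / ((d : ℝ) * q) + (d : ℝ) / ((n : ℝ) * q)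
      + (q : ℝ) / ((n : ℝ) * d) - 3 := by
  have H := three_term_aux d.toNat d hd le_rfl n q m c j k r hn hqpos hm hc hq hjk hr
  unfold Sded
  linear_combination H
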